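/- Intermediate Hessian-comparison step: if ∇²h* is M-Lipschitz in operator norm, then for all x, y, v ∈ ℝ^d and λ ∈ [-1,1], D_{h*}(x + λv, x) ≤ λ² ( D_{h*}(y + v, y) + M(‖y - x‖ + ‖v‖)‖v‖² ). -/

import Mathlib

open Set
noncomputable section

abbrev E (d : ℕ) := EuclideanSpace ℝ (Fin d)

/-- Bregman divergence `D_f(x,y) = f x - f y - ⟪∇f(y), x - y⟫`. -/
def breg {d : ℕ} (f : E d → ℝ) (f' : E d → E d) (x y : E d) : ℝ :=
  f x - f y - inner ℝ (f' y) (x - y)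

/-- **Hessian-comparison step.** If `h*` is twice continuously
differentiable and convex with `∇²h*` `M`-Lipschitz in operator norm, then for
all `x, y, v ∈ ℝ^d` and `λ ∈ [-1,1]`,
`D_{h*}(x + λv, x) ≤ λ² (D_{h*}(y + v, y) + M(‖y - x‖ + ‖v‖)‖v‖²)`. -/
theorem hessian_comparison_step {d : ℕ}
    (hstar : E d → ℝ) (hstar' : E d → E d) (hstar'' : E d → E d →L[ℝ] E d)
    (M : ℝ) (hM : 0 ≤ M)
    (hconv : ConvexOn ℝ Set.univ hstar)
    (hsmooth : ContDiff ℝ 2 hstar)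
    (hgrad : ∀ a : E d, HasGradientAt hstar (hstar' a) a)
    (hhess : ∀ a : E d, HasFDerivAt hstar' (hstar'' a) a)
    (hlip : ∀ a b u : E d, ‖hstar'' a u - hstar'' b u‖ ≤ M * ‖a - b‖ * ‖u‖)
    (x y v : E d) (l : ℝ) (hl : l ∈ Set.Icc (-1 : ℝ) 1) :
    breg hstar hstar' (x + l • v) x
      ≤ l ^ 2 * (breg hstar hstar' (y + v) y + M * (‖y - x‖ + ‖v‖) * ‖v‖ ^ 2) := by
  obtain ⟨hl1, hl2⟩ := hl
  set w : E d := l • v with hw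
  set K : ℝ := M * (‖y - x‖ + 2 * ‖v‖) * ‖v‖ ^ 2 with hK
  have hKnn : 0 ≤ K := by positivity
  -- line derivatives
  have lineD : ∀ (p u : E d) (t : ℝ), HasDerivAt (fun s : ℝ => p + s • u) u t := by
    intro p u t
    simpa using ((hasDerivAt_id t).smul_const u).const_add p
  -- first derivative along lines
  have hA : ∀ (p u : E d) (t : ℝ),
      HasDerivAt (fun s : ℝ => hstar (p + s • u)) (inner ℝ (hstar' (p + t • u)) u) t := by
    intro p u t
    have h := ((hgrad (p + t • u)).hasFDerivAt.comp_hasDerivAt t (lineD p u t))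
    exact h
  -- second derivative along lines
  have hA' : ∀ (p u : E d) (t : ℝ),
      HasDerivAt (fun s : ℝ => (inner ℝ (hstar' (p + s • u)) u : ℝ))
        (inner ℝ (hstar'' (p + t • u) u) u) t := by
    intro p u t
    have h1 : HasDerivAt (fun s : ℝ => hstar' (p + s • u)) (hstar'' (p + t • u) u) t :=
      (hhess (p + t • u)).comp_hasDerivAt t (lineD p u t)
    have h2 := h1.inner ℝ (hasDerivAt_const t u)
    simpa using h2
  -- the auxiliary functions
  set φ : ℝ → ℝ := fun t =>
    l ^ 2 * ((hstar (y + t • v) - hstar y - t * inner ℝ (hstar' y) v) + K * t ^ 2 / 2)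
      - (hstar (x + t • w) - hstar x - t * inner ℝ (hstar' x) w) with hφdef
  set ψ : ℝ → ℝ := fun t =>
    l ^ 2 * ((inner ℝ (hstar' (y + t • v)) v - inner ℝ (hstar' y) v) + K * t)
      - (inner ℝ (hstar' (x + t • w)) w - inner ℝ (hstar' x) w) with hψdef
  have hφ : ∀ t : ℝ, HasDerivAt φ (ψ t) t := by
    intro t
    have h := ((((hA y v t).sub_const (hstar y)).sub
        ((hasDerivAt_id t).mul_const (inner ℝ (hstar' y) v : ℝ))).add
        (((hasDerivAt_pow 2 t).const_mul K).div_const 2)).const_mul (l ^ 2) |>.sub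
      (((hA x w t).sub_const (hstar x)).sub
        ((hasDerivAt_id t).mul_const (inner ℝ (hstar' x) w : ℝ)))
    refine h.congr_deriv ?_
    simp only [hψdef, id_eq, pow_one, Nat.cast_ofNat, one_mul]
    ring
  have hψ : ∀ t : ℝ, HasDerivAt ψ
      (l ^ 2 * ((inner ℝ (hstar'' (y + t • v) v) v : ℝ) + K)
        - inner ℝ (hstar'' (x + t • w) w) w) t := by
    intro t
    have h := (((hA' y v t).sub_const (inner ℝ (hstar' y) v : ℝ)).add
        ((hasDerivAt_id t).const_mul K)).const_mul (l ^ 2) |>.sub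
      ((hA' x w t).sub_const (inner ℝ (hstar' x) w : ℝ))
    refine h.congr_deriv ?_
    ring
  -- nonnegativity of the second derivative of φ on [0,1]
  have hψnn : ∀ t ∈ Icc (0:ℝ) 1,
      0 ≤ l ^ 2 * ((inner ℝ (hstar'' (y + t • v) v) v : ℝ) + K)
        - inner ℝ (hstar'' (x + t • w) w) w := by
    intro t ht
    have hwinner : (inner ℝ (hstar'' (x + t • w) w) w : ℝ)
        = l ^ 2 * inner ℝ (hstar'' (x + t • w) v) v := by
      rw [hw]
      rw [map_smul, real_inner_smul_left, real_inner_smul_right]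
      ring
    rw [hwinner]
    have key : (inner ℝ (hstar'' (x + t • w) v) v : ℝ)
        - inner ℝ (hstar'' (y + t • v) v) v ≤ K := by
      have h1 : (inner ℝ (hstar'' (x + t • w) v) v : ℝ)
          - inner ℝ (hstar'' (y + t • v) v) v
          = inner ℝ (hstar'' (x + t • w) v - hstar'' (y + t • v) v) v := by
        rw [inner_sub_left]
      rw [h1]
      calc (inner ℝ (hstar'' (x + t • w) v - hstar'' (y + t • v) v) v : ℝ)
          ≤ ‖hstar'' (x + t • w) v - hstar'' (y + t • v) v‖ * ‖v‖ :=
            real_inner_le_norm _ _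
        _ ≤ (M * ‖(x + t • w) - (y + t • v)‖ * ‖v‖) * ‖v‖ := by
            gcongr; exact hlip _ _ _
        _ ≤ K := by
            have hd : ‖(x + t • w) - (y + t • v)‖ ≤ ‖y - x‖ + 2 * ‖v‖ := by
              have : (x + t • w) - (y + t • v) = (x - y) + (t * (l - 1)) • v := by
                rw [hw]; module
              rw [this]
              calc ‖(x - y) + (t * (l - 1)) • v‖
                  ≤ ‖x - y‖ + ‖(t * (l - 1)) • v‖ := norm_add_le _ _
                _ ≤ ‖y - x‖ + 2 * ‖v‖ := by
                    rw [norm_sub_rev, norm_smul]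
                    gcongr
                    rw [Real.norm_eq_abs, abs_mul]
                    have h1 : |t| ≤ 1 := by
                      rw [abs_le]; constructor <;> [linarith [ht.1]; exact ht.2]
                    have h2 : |l - 1| ≤ 2 := by rw [abs_le]; constructor <;> linarith
                    calc |t| * |l - 1| ≤ 1 * 2 := by
                          exact mul_le_mul h1 h2 (abs_nonneg _) one_pos.le
                      _ = 2 := by ring
            calc M * ‖(x + t • w) - (y + t • v)‖ * ‖v‖ * ‖v‖
                ≤ M * (‖y - x‖ + 2 * ‖v‖) * ‖v‖ * ‖v‖ := by gcongr
              _ = K := by rw [hK]; ring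
    nlinarith [sq_nonneg l, mul_le_mul_of_nonneg_left key (sq_nonneg l)]
  -- ψ 0 = 0
  have hψ0 : ψ 0 = 0 := by simp [hψdef]
  -- ψ is nonneg on [0,1]
  have hmono1 : MonotoneOn ψ (Icc 0 1) := by
    apply monotoneOn_of_deriv_nonneg (convex_Icc 0 1)
    · exact fun t _ => (hψ t).differentiableAt.continuousAt.continuousWithinAt
    · exact fun t _ => (hψ t).differentiableAt.differentiableWithinAt
    · intro t ht
      rw [interior_Icc] at ht
      rw [(hψ t).deriv]
      exact hψnn t ⟨ht.1.le, ht.2.le⟩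
  have hψnonneg : ∀ t ∈ Icc (0:ℝ) 1, 0 ≤ ψ t := by
    intro t ht
    have := hmono1 (left_mem_Icc.2 one_pos.le) ht ht.1
    rwa [hψ0] at this
  -- φ is monotone on [0,1]
  have hmono2 : MonotoneOn φ (Icc 0 1) := by
    apply monotoneOn_of_deriv_nonneg (convex_Icc 0 1)
    · exact fun t _ => (hφ t).differentiableAt.continuousAt.continuousWithinAt
    · exact fun t _ => (hφ t).differentiableAt.differentiableWithinAt
    · intro t ht
      rw [interior_Icc] at ht
      rw [(hφ t).deriv]
      exact hψnonneg t ⟨ht.1.le, ht.2.le⟩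
  have hφ0 : φ 0 = 0 := by simp [hφdef]
  have hφ1 : 0 ≤ φ 1 := by
    have := hmono2 (left_mem_Icc.2 one_pos.le) (right_mem_Icc.2 one_pos.le) one_pos.le
    rwa [hφ0] at this
  -- unfold
  have e1 : breg hstar hstar' (x + l • v) x
      = hstar (x + (1:ℝ) • w) - hstar x - (1:ℝ) * inner ℝ (hstar' x) w := by
    simp [breg, hw]
  have e2 : breg hstar hstar' (y + v) y
      = hstar (y + (1:ℝ) • v) - hstar y - (1:ℝ) * inner ℝ (hstar' y) v := by
    simp [breg]
  rw [e1, e2]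
  have hφ1' : hstar (x + (1:ℝ) • w) - hstar x - (1:ℝ) * inner ℝ (hstar' x) w
      ≤ l ^ 2 * ((hstar (y + (1:ℝ) • v) - hstar y - (1:ℝ) * inner ℝ (hstar' y) v) + K / 2) := by
    have := hφ1
    simp only [hφdef, one_pow, mul_one] at this
    linarith
  have hK2 : K / 2 ≤ M * (‖y - x‖ + ‖v‖) * ‖v‖ ^ 2 := by
    rw [hK]
    nlinarith [norm_nonneg (y - x), norm_nonneg v, sq_nonneg ‖v‖, mul_nonneg hM (mul_nonneg (norm_nonneg (y-x)) (sq_nonneg ‖v‖))]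
  calc hstar (x + (1:ℝ) • w) - hstar x - (1:ℝ) * inner ℝ (hstar' x) w
      ≤ l ^ 2 * ((hstar (y + (1:ℝ) • v) - hstar y - (1:ℝ) * inner ℝ (hstar' y) v) + K / 2) := hφ1'
    _ ≤ l ^ 2 * ((hstar (y + (1:ℝ) • v) - hstar y - (1:ℝ) * inner ℝ (hstar' y) v)
          + M * (‖y - x‖ + ‖v‖) * ‖v‖ ^ 2) := by
        gcongr
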